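/- For each k ≥ 1 there exist rationals 1 < f₁ < f₂ < … < f_k = 1 + 1/4^k, each with numerator and denominator (in lowest terms) at most 4^{k²+k}, such that the product f := f_k^{2^k}·…·f₂^{4}·f₁^{2} has numerator and denominator (in lowest terms) at most 4^{2(k²+k)}. -/

import Mathlib

lemma sum_pow_two_Icc (k : ℕ) : ∑ i ∈ Finset.Icc 1 k, 2 ^ i = 2 ^ (k + 1) - 2 := by
  induction k with
  | zero => simp
  | succ k ih =>
    rw [Finset.sum_Icc_succ_top (by omega), ih]
    have h1 : 2 ≤ 2 ^ (k + 1) := Nat.one_lt_two_pow (by omega)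
    have h2 : 2 ^ (k + 1 + 1) = 2 * 2 ^ (k + 1) := by ring
    omega

lemma aux_D (r : ℕ → ℚ) (k : ℕ) :
    ∏ i ∈ Finset.Icc 1 k, (∏ j ∈ Finset.Icc (i + 1) k, r j) ^ (2 ^ i)
      = ∏ j ∈ Finset.Icc 1 k, r j ^ (2 ^ j - 2) := by
  induction k with
  | zero => simp
  | succ k ih =>
    rw [Finset.prod_Icc_succ_top (f := fun j => r j ^ (2 ^ j - 2)) (by omega)]
    rw [Finset.prod_Icc_succ_top (by omega)]
    have h1 : ∀ i ∈ Finset.Icc 1 k,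
        (∏ j ∈ Finset.Icc (i + 1) (k + 1), r j) ^ (2 ^ i)
          = (∏ j ∈ Finset.Icc (i + 1) k, r j) ^ (2 ^ i) * r (k + 1) ^ (2 ^ i) := by
      intro i hi
      simp only [Finset.mem_Icc] at hi
      rw [Finset.prod_Icc_succ_top (by omega), mul_pow]
    rw [Finset.prod_congr rfl h1, Finset.prod_mul_distrib, ih,
      Finset.prod_pow_eq_pow_sum, sum_pow_two_Icc]
    have h3 : Finset.Icc (k + 1 + 1) (k + 1) = ∅ := by
      rw [Finset.Icc_eq_empty]; omega
    rw [h3, Finset.prod_empty, one_pow, mul_one]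

lemma aux_main (r : ℕ → ℚ) (hr : ∀ j, r j ≠ 0) (k : ℕ) :
    ∏ i ∈ Finset.Icc 1 k, (r i / ∏ j ∈ Finset.Icc (i + 1) k, r j) ^ (2 ^ i)
      = (∏ j ∈ Finset.Icc 1 k, r j) ^ 2 := by
  have h1 : ∀ i ∈ Finset.Icc 1 k,
      (r i / ∏ j ∈ Finset.Icc (i + 1) k, r j) ^ (2 ^ i)
        = r i ^ (2 ^ i) / (∏ j ∈ Finset.Icc (i + 1) k, r j) ^ (2 ^ i) := by
    intro i _; rw [div_pow]
  rw [Finset.prod_congr rfl h1, Finset.prod_div_distrib, aux_D,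
    ← Finset.prod_pow, ← Finset.prod_div_distrib]
  refine Finset.prod_congr rfl fun i hi => ?_
  simp only [Finset.mem_Icc] at hi
  have h2 : 2 ^ i = 2 ^ i - 2 + 2 := by
    have : 2 ≤ 2 ^ i := by
      calc 2 = 2 ^ 1 := rfl
      _ ≤ 2 ^ i := Nat.pow_le_pow_right (by omega) hi.1
    omega
  conv_lhs => rw [h2]
  rw [Nat.add_sub_cancel, pow_add, mul_comm, mul_div_assoc,
    div_self (pow_ne_zero _ (hr i)), mul_one]

lemma prod_r_bound (k d : ℕ) (hd : d ≤ k) :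
    ∏ j ∈ Finset.Icc (k + 1 - d) k, (1 + (2:ℚ) ^ (k - j) / 4 ^ k)
      ≤ 1 + ((2:ℚ) ^ d - 1) / 4 ^ k + ((2:ℚ) ^ d - 1) ^ 2 / ((4:ℚ) ^ k) ^ 2 := by
  induction d with
  | zero => simp
  | succ d ih =>
    have ih' := ih (by omega)
    have hset : Finset.Icc (k - d) k = insert (k - d) (Finset.Icc (k + 1 - d) k) := by
      ext x; simp only [Finset.mem_Icc, Finset.mem_insert]; omega
    have hnotmem : k - d ∉ Finset.Icc (k + 1 - d) k := by
      simp only [Finset.mem_Icc]; omega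
    have hkd : k + 1 - (d + 1) = k - d := by omega
    have hexp : k - (k - d) = d := by omega
    rw [hkd, hset, Finset.prod_insert hnotmem, hexp]
    have hq : (0:ℚ) < 4 ^ k := by positivity
    set q : ℚ := 4 ^ k with hq_def
    set t : ℚ := 2 ^ d with ht_def
    have ht1 : (1:ℚ) ≤ t := one_le_pow₀ (by norm_num)
    have ht2 : t ^ 2 ≤ q := by
      rw [ht_def, hq_def, ← pow_mul]
      calc (2:ℚ) ^ (d * 2) ≤ 2 ^ (k * 2) :=
        pow_le_pow_right₀ (by norm_num) (by omega)
      _ = 4 ^ k := by rw [show (4:ℚ) = 2 ^ 2 by norm_num, ← pow_mul, mul_comm]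
    have hfac : (0:ℚ) ≤ 1 + t / q := by positivity
    calc (1 + t / q) * ∏ j ∈ Finset.Icc (k + 1 - d) k, (1 + (2:ℚ) ^ (k - j) / 4 ^ k)
        ≤ (1 + t / q) * (1 + (t - 1) / q + (t - 1) ^ 2 / q ^ 2) :=
          mul_le_mul_of_nonneg_left ih' hfac
      _ ≤ 1 + ((2:ℚ) ^ (d + 1) - 1) / q + ((2:ℚ) ^ (d + 1) - 1) ^ 2 / q ^ 2 := by
          rw [show (2:ℚ) ^ (d + 1) = 2 * t by rw [ht_def]; ring]
          have key : (t - 1) ^ 2 ≤ (2 * t - 1) * q := by nlinarith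
          rw [← sub_nonneg]
          have expand : (1 + (2*t-1)/q + (2*t-1)^2/q^2)
              - (1+t/q)*(1+(t-1)/q+(t-1)^2/q^2)
              = t*((2*t-1)*q - (t-1)^2)/q^3 := by
            field_simp
            ring
          rw [expand]
          apply div_nonneg _ (by positivity)
          nlinarith

lemma num_den_le (q : ℚ) (A B : ℕ) (hA : 0 < A) (hB : 0 < B)
    (hq : q = (A : ℚ) / (B : ℚ)) : q.num ≤ (A : ℤ) ∧ q.den ≤ B := by
  have hq' : q = Rat.divInt (A : ℤ) (B : ℤ) := by
    rw [Rat.divInt_eq_div]; push_cast; exact hq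
  constructor
  · refine Int.le_of_dvd (by exact_mod_cast hA) ?_
    rw [hq']
    exact Rat.num_dvd _ (by exact_mod_cast hB.ne')
  · have h := Rat.den_dvd (A : ℤ) (B : ℤ)
    rw [← hq'] at h
    exact Nat.le_of_dvd hB (by exact_mod_cast h)

lemma f_gt_one (k i : ℕ) (h1 : 1 ≤ i) (h2 : i ≤ k) :
    1 < (1 + (2:ℚ) ^ (k - i) / 4 ^ k) /
      ∏ j ∈ Finset.Icc (i + 1) k, (1 + (2:ℚ) ^ (k - j) / 4 ^ k) := by
  have hq : (0:ℚ) < 4 ^ k := by positivity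
  have hP : 0 < ∏ j ∈ Finset.Icc (i + 1) k, (1 + (2:ℚ) ^ (k - j) / 4 ^ k) :=
    Finset.prod_pos fun j _ => by positivity
  rw [lt_div_iff₀ hP, one_mul]
  have hb := prod_r_bound k (k - i) (by omega)
  rw [show k + 1 - (k - i) = i + 1 by omega] at hb
  refine lt_of_le_of_lt hb ?_
  set u : ℚ := 2 ^ (k - i) with hu_def
  have hu1 : (1:ℚ) ≤ u := one_le_pow₀ (by norm_num)
  have hu2 : u ^ 2 ≤ 4 ^ k := by
    rw [hu_def, ← pow_mul]
    calc (2:ℚ) ^ ((k - i) * 2) ≤ 2 ^ (k * 2) :=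
      pow_le_pow_right₀ (by norm_num) (by omega)
    _ = 4 ^ k := by rw [show (4:ℚ) = 2 ^ 2 by norm_num, ← pow_mul, mul_comm]
  rw [← sub_pos]
  have expand : (1 + u / 4 ^ k)
      - (1 + (u - 1) / 4 ^ k + (u - 1) ^ 2 / ((4:ℚ) ^ k) ^ 2)
      = ((4:ℚ) ^ k - (u - 1) ^ 2) / ((4:ℚ) ^ k) ^ 2 := by
    field_simp
    ring
  rw [expand]
  apply div_pos _ (by positivity)
  nlinarith

lemma f_lt_succ (k m : ℕ) (h1 : 1 ≤ m) (h2 : m + 1 ≤ k) :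
    (1 + (2:ℚ) ^ (k - m) / 4 ^ k) /
        ∏ j ∈ Finset.Icc (m + 1) k, (1 + (2:ℚ) ^ (k - j) / 4 ^ k)
      < (1 + (2:ℚ) ^ (k - (m + 1)) / 4 ^ k) /
        ∏ j ∈ Finset.Icc (m + 1 + 1) k, (1 + (2:ℚ) ^ (k - j) / 4 ^ k) := by
  have hq : (0:ℚ) < 4 ^ k := by positivity
  have hset : Finset.Icc (m + 1) k = insert (m + 1) (Finset.Icc (m + 1 + 1) k) := by
    ext x; simp only [Finset.mem_Icc, Finset.mem_insert]; omega
  have hnotmem : m + 1 ∉ Finset.Icc (m + 1 + 1) k := by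
    simp only [Finset.mem_Icc]; omega
  have hP2 : 0 < ∏ j ∈ Finset.Icc (m + 1 + 1) k, (1 + (2:ℚ) ^ (k - j) / 4 ^ k) :=
    Finset.prod_pos fun j _ => by positivity
  rw [hset, Finset.prod_insert hnotmem]
  set v : ℚ := 2 ^ (k - (m + 1)) with hv_def
  have hv0 : (0:ℚ) < v := by positivity
  have hv : (2:ℚ) ^ (k - m) = 2 * v := by
    rw [hv_def, show k - m = (k - (m + 1)) + 1 by omega, pow_succ']
  have hb : (0:ℚ) < 1 + v / 4 ^ k := by positivity
  rw [hv, div_lt_div_iff₀ (by positivity) hP2]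
  set P := ∏ j ∈ Finset.Icc (m + 1 + 1) k, (1 + (2:ℚ) ^ (k - j) / 4 ^ k)
  have key : (0:ℚ) < v ^ 2 / ((4:ℚ) ^ k) ^ 2 := by positivity
  have expand : (1 + v / 4 ^ k) * ((1 + v / 4 ^ k) * P) - (1 + 2 * v / 4 ^ k) * P
      = (v ^ 2 / ((4:ℚ) ^ k) ^ 2) * P := by
    field_simp
    ring
  nlinarith [mul_pos key hP2]

lemma f_top (k : ℕ) :
    (1 + (2:ℚ) ^ (k - k) / 4 ^ k) /
        ∏ j ∈ Finset.Icc (k + 1) k, (1 + (2:ℚ) ^ (k - j) / 4 ^ k)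
      = 1 + 1 / 4 ^ k := by
  rw [Finset.Icc_eq_empty (by omega), Finset.prod_empty, div_one,
    Nat.sub_self, pow_zero]

lemma exp_identity (k : ℕ) (hk : 1 ≤ k) : k + (k + k * (k - 1)) = k ^ 2 + k := by
  obtain ⟨m, rfl⟩ : ∃ m, k = m + 1 := ⟨k - 1, by omega⟩
  simp only [Nat.add_sub_cancel]
  ring

lemma f_repr (k i : ℕ) (h2 : i ≤ k) :
    (1 + (2:ℚ) ^ (k - i) / 4 ^ k) /
        ∏ j ∈ Finset.Icc (i + 1) k, (1 + (2:ℚ) ^ (k - j) / 4 ^ k)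
      = (((4 ^ k + 2 ^ (k - i)) * (4 ^ k) ^ (k - i) : ℕ) : ℚ) /
        ((4 ^ k * ∏ j ∈ Finset.Icc (i + 1) k, (4 ^ k + 2 ^ (k - j)) : ℕ) : ℚ) := by
  have hQ : ((4:ℚ) ^ k) ≠ 0 := by positivity
  have hfac : ∀ j ∈ Finset.Icc (i + 1) k,
      (1 + (2:ℚ) ^ (k - j) / 4 ^ k)
        = (((4 ^ k + 2 ^ (k - j) : ℕ)) : ℚ) / (4:ℚ) ^ k := by
    intro j _
    push_cast
    field_simp
  rw [Finset.prod_congr rfl hfac, Finset.prod_div_distrib, Finset.prod_const,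
    Nat.card_Icc, show k + 1 - (i + 1) = k - i by omega]
  have hprodpos : (0:ℚ) < ∏ j ∈ Finset.Icc (i + 1) k, (((4 ^ k + 2 ^ (k - j) : ℕ)) : ℚ) :=
    Finset.prod_pos fun j _ => by positivity
  push_cast
  field_simp

lemma a_le (k j : ℕ) (hk : 1 ≤ k) : 4 ^ k + 2 ^ (k - j) ≤ 4 ^ k * 4 ^ k := by
  have h1 : 2 ^ (k - j) ≤ 4 ^ k :=
    le_trans (Nat.pow_le_pow_right (by norm_num) (by omega))
      (Nat.pow_le_pow_left (by norm_num) k)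
  have h2 : 2 ≤ 4 ^ k := by
    calc 2 ≤ 4 ^ 1 := by norm_num
    _ ≤ 4 ^ k := Nat.pow_le_pow_right (by norm_num) hk
  nlinarith [Nat.one_le_two_pow (n := k - j)]

lemma f_numden (k i : ℕ) (hk : 1 ≤ k) (h1 : 1 ≤ i) (h2 : i ≤ k) :
    ((1 + (2:ℚ) ^ (k - i) / 4 ^ k) /
        ∏ j ∈ Finset.Icc (i + 1) k, (1 + (2:ℚ) ^ (k - j) / 4 ^ k)).num ≤ (4:ℤ) ^ (k ^ 2 + k)
    ∧ ((1 + (2:ℚ) ^ (k - i) / 4 ^ k) /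
        ∏ j ∈ Finset.Icc (i + 1) k, (1 + (2:ℚ) ^ (k - j) / 4 ^ k)).den ≤ 4 ^ (k ^ 2 + k) := by
  have hApos : 0 < (4 ^ k + 2 ^ (k - i)) * (4 ^ k) ^ (k - i) := by positivity
  have hBpos : 0 < 4 ^ k * ∏ j ∈ Finset.Icc (i + 1) k, (4 ^ k + 2 ^ (k - j)) := by
    refine Nat.mul_pos (by positivity) (Finset.prod_pos fun j _ => by positivity)
  have h := num_den_le _ _ _ hApos hBpos (f_repr k i h2)
  have hA_le : (4 ^ k + 2 ^ (k - i)) * (4 ^ k) ^ (k - i) ≤ 4 ^ (k ^ 2 + k) := by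
    calc (4 ^ k + 2 ^ (k - i)) * (4 ^ k) ^ (k - i)
        ≤ (4 ^ k * 4 ^ k) * (4 ^ k) ^ (k - 1) :=
          Nat.mul_le_mul (a_le k i hk) (Nat.pow_le_pow_right (by positivity) (by omega))
      _ = 4 ^ (k + (k + k * (k - 1))) := by
          rw [← pow_mul, ← pow_add, ← pow_add]
          ring
      _ = 4 ^ (k ^ 2 + k) := by rw [exp_identity k hk]
  have hB_le : 4 ^ k * ∏ j ∈ Finset.Icc (i + 1) k, (4 ^ k + 2 ^ (k - j)) ≤ 4 ^ (k ^ 2 + k) := by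
    have hp1 : ∏ j ∈ Finset.Icc (i + 1) k, (4 ^ k + 2 ^ (k - j))
        ≤ ∏ j ∈ Finset.Icc (i + 1) k, (2 * 4 ^ k) := by
      refine Finset.prod_le_prod' fun j _ => ?_
      have : 2 ^ (k - j) ≤ 4 ^ k :=
        le_trans (Nat.pow_le_pow_right (by norm_num) (by omega))
          (Nat.pow_le_pow_left (by norm_num) k)
      omega
    have hp2 : ∏ j ∈ Finset.Icc (i + 1) k, (2 * 4 ^ k) = (2 * 4 ^ k) ^ (k - i) := by
      rw [Finset.prod_const, Nat.card_Icc, show k + 1 - (i + 1) = k - i by omega]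
    have hp3 : (2 * 4 ^ k) ^ (k - i) ≤ (2 * 4 ^ k) ^ (k - 1) :=
      Nat.pow_le_pow_right (by positivity) (by omega)
    have h2le : (2:ℕ) ^ (k - 1) ≤ 4 ^ k :=
      le_trans (Nat.pow_le_pow_right (by norm_num) (by omega))
        (Nat.pow_le_pow_left (by norm_num) k)
    calc 4 ^ k * ∏ j ∈ Finset.Icc (i + 1) k, (4 ^ k + 2 ^ (k - j))
        ≤ 4 ^ k * (2 * 4 ^ k) ^ (k - 1) := by
          refine Nat.mul_le_mul_left _ (le_trans hp1 (by rw [hp2]; exact hp3))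
      _ = 4 ^ k * (2 ^ (k - 1) * (4 ^ k) ^ (k - 1)) := by rw [mul_pow]
      _ ≤ 4 ^ k * (4 ^ k * (4 ^ k) ^ (k - 1)) :=
          Nat.mul_le_mul_left _ (Nat.mul_le_mul_right _ h2le)
      _ = 4 ^ (k + (k + k * (k - 1))) := by
          rw [← pow_mul, ← pow_add, ← pow_add]
      _ = 4 ^ (k ^ 2 + k) := by rw [exp_identity k hk]
  constructor
  · exact le_trans h.1 (by exact_mod_cast hA_le)
  · exact le_trans h.2 hB_le

lemma prod_repr (k : ℕ) :
    (∏ j ∈ Finset.Icc 1 k, (1 + (2:ℚ) ^ (k - j) / 4 ^ k)) ^ 2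
      = (((∏ j ∈ Finset.Icc 1 k, (4 ^ k + 2 ^ (k - j))) ^ 2 : ℕ) : ℚ) /
        (((4 ^ k) ^ (2 * k) : ℕ) : ℚ) := by
  have hQ : ((4:ℚ) ^ k) ≠ 0 := by positivity
  have hfac : ∀ j ∈ Finset.Icc 1 k,
      (1 + (2:ℚ) ^ (k - j) / 4 ^ k)
        = (((4 ^ k + 2 ^ (k - j) : ℕ)) : ℚ) / (4:ℚ) ^ k := by
    intro j _
    push_cast
    field_simp
  rw [Finset.prod_congr rfl hfac, Finset.prod_div_distrib, Finset.prod_const,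
    Nat.card_Icc, show k + 1 - 1 = k by omega]
  push_cast
  rw [div_pow, ← pow_mul]
  ring_nf

lemma prod_numden (k : ℕ) (hk : 1 ≤ k) :
    (∏ i ∈ Finset.Icc 1 k,
        ((1 + (2:ℚ) ^ (k - i) / 4 ^ k) /
          ∏ j ∈ Finset.Icc (i + 1) k, (1 + (2:ℚ) ^ (k - j) / 4 ^ k)) ^ (2 ^ i)).num
        ≤ (4:ℤ) ^ (2 * (k ^ 2 + k))
    ∧ (∏ i ∈ Finset.Icc 1 k,
        ((1 + (2:ℚ) ^ (k - i) / 4 ^ k) /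
          ∏ j ∈ Finset.Icc (i + 1) k, (1 + (2:ℚ) ^ (k - j) / 4 ^ k)) ^ (2 ^ i)).den
        ≤ 4 ^ (2 * (k ^ 2 + k)) := by
  have hmain := aux_main (fun j => 1 + (2:ℚ) ^ (k - j) / 4 ^ k)
    (fun j => by positivity) k
  rw [hmain, prod_repr]
  have hApos : 0 < (∏ j ∈ Finset.Icc 1 k, (4 ^ k + 2 ^ (k - j))) ^ 2 := by
    exact pow_pos (Finset.prod_pos fun j _ => by positivity) 2
  have hBpos : 0 < ((4:ℕ) ^ k) ^ (2 * k) := by positivity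
  have h := num_den_le _ _ _ hApos hBpos rfl
  have hp1 : ∏ j ∈ Finset.Icc 1 k, (4 ^ k + 2 ^ (k - j)) ≤ (2 * 4 ^ k) ^ k := by
    calc ∏ j ∈ Finset.Icc 1 k, (4 ^ k + 2 ^ (k - j))
        ≤ ∏ j ∈ Finset.Icc 1 k, (2 * 4 ^ k) := by
          refine Finset.prod_le_prod' fun j _ => ?_
          have : 2 ^ (k - j) ≤ 4 ^ k :=
            le_trans (Nat.pow_le_pow_right (by norm_num) (by omega))
              (Nat.pow_le_pow_left (by norm_num) k)
          omega
      _ = (2 * 4 ^ k) ^ k := by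
          rw [Finset.prod_const, Nat.card_Icc, Nat.add_sub_cancel]
  have hA_le : (∏ j ∈ Finset.Icc 1 k, (4 ^ k + 2 ^ (k - j))) ^ 2
      ≤ 4 ^ (2 * (k ^ 2 + k)) := by
    calc (∏ j ∈ Finset.Icc 1 k, (4 ^ k + 2 ^ (k - j))) ^ 2
        ≤ ((2 * 4 ^ k) ^ k) ^ 2 := Nat.pow_le_pow_left hp1 2
      _ = ((2:ℕ) * 4 ^ k) ^ (2 * k) := by rw [← pow_mul, mul_comm k 2]
      _ = 2 ^ (2 * k) * (4 ^ k) ^ (2 * k) := mul_pow _ _ _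
      _ = 4 ^ k * 4 ^ (k * (2 * k)) := by
          rw [pow_mul 2 2 k, ← pow_mul 4 k (2 * k)]
          norm_num
      _ = 4 ^ (k + k * (2 * k)) := (pow_add 4 _ _).symm
      _ ≤ 4 ^ (2 * (k ^ 2 + k)) := Nat.pow_le_pow_right (by norm_num) (by nlinarith)
  have hB_le : ((4:ℕ) ^ k) ^ (2 * k) ≤ 4 ^ (2 * (k ^ 2 + k)) := by
    rw [← pow_mul]
    exact Nat.pow_le_pow_right (by norm_num) (by nlinarith)
  exact ⟨le_trans h.1 (by exact_mod_cast hA_le), le_trans h.2 hB_le⟩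

theorem exists_fractions_with_small_description (k : ℕ) (hk : 1 ≤ k) :
    ∃ f : ℕ → ℚ,
      (∀ i, 1 ≤ i → i ≤ k → 1 < f i) ∧
      (∀ i j, 1 ≤ i → i < j → j ≤ k → f i < f j) ∧
      f k = 1 + 1 / 4 ^ k ∧
      (∀ i, 1 ≤ i → i ≤ k →
        (f i).num ≤ (4 : ℤ) ^ (k ^ 2 + k) ∧ (f i).den ≤ 4 ^ (k ^ 2 + k)) ∧
      (∏ i ∈ Finset.Icc 1 k, (f i) ^ (2 ^ i)).num ≤ (4 : ℤ) ^ (2 * (k ^ 2 + k)) ∧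
      (∏ i ∈ Finset.Icc 1 k, (f i) ^ (2 ^ i)).den ≤ 4 ^ (2 * (k ^ 2 + k)) := by
  refine ⟨fun i => (1 + (2:ℚ) ^ (k - i) / 4 ^ k) /
      ∏ j ∈ Finset.Icc (i + 1) k, (1 + (2:ℚ) ^ (k - j) / 4 ^ k),
    fun i h1 h2 => f_gt_one k i h1 h2, ?_, f_top k,
    fun i h1 h2 => f_numden k i hk h1 h2, (prod_numden k hk).1, (prod_numden k hk).2⟩
  intro i j h1 hij hjk
  induction j with
  | zero => omega
  | succ j ihj =>
    rcases Nat.lt_or_ge i j with hlt | hge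
    · exact lt_trans (ihj hlt (by omega)) (f_lt_succ k j (by omega) (by omega))
    · have : i = j := by omega
      subst this
      exact f_lt_succ k i h1 (by omega)
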